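/- Probability that an uncovered cluster stays uncovered under amplified sampling: let A be an optimal cluster, and suppose there exists A′ ⊆ A with φ_C(A′) ≥ φ_C(A)/5 such that sampling any c ∈ A′ would cover A. If each point c is independently included with probability at least min(1, T·p(c)/2) where p(c) = d(c,C)/∑_{x∈X} d(x,C), then Pr[no point of A′ is sampled] ≤ exp(−T·φ_C(A)/(10·φ_C(X))). -/

import Mathlib

/-- distance of a point to a finite set of centers -/
noncomputable def dSet {X : Type*} [MetricSpace X] (x : X) (C : Finset X) : ℝ :=
  sInf ((fun c => dist x c) '' (C : Set X))

lemma dSet_nonneg {X : Type*} [MetricSpace X] (x : X) (C : Finset X) : 0 ≤ dSet x C := by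
  apply Real.sInf_nonneg
  rintro r ⟨c, _, rfl⟩
  exact dist_nonneg

/-- Probability that an uncovered cluster stays uncovered under amplified
sampling: let `A' ⊆ A` with `φ_C(A') ≥ φ_C(A)/5`. If each point `c` is
independently included with probability `q c ≥ min(1, T·p(c)/2)` where
`p(c) = d(c,C)/∑_{x∈X} d(x,C)`, then the probability `∏_{c∈A'} (1 - q c)` that
no point of `A'` is sampled is at most `exp(−T·φ_C(A)/(10·φ_C(X)))`. -/
theorem stmt_12 {X : Type*} [MetricSpace X] [Fintype X]
    (C : Finset X) (A A' : Finset X) (hAA : A' ⊆ A)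
    (T : ℝ) (hT : 0 ≤ T)
    (hpos : 0 < ∑ x : X, dSet x C)
    (hA' : (∑ a ∈ A, dSet a C) / 5 ≤ ∑ a ∈ A', dSet a C)
    (q : X → ℝ)
    (hq1 : ∀ c ∈ A', q c ≤ 1)
    (hq : ∀ c ∈ A', min 1 (T * (dSet c C / ∑ x : X, dSet x C) / 2) ≤ q c) :
    ∏ c ∈ A', (1 - q c) ≤
      Real.exp (-(T * ∑ a ∈ A, dSet a C) / (10 * ∑ x : X, dSet x C)) := by
  set S := ∑ x : X, dSet x C with hS
  have step1 : ∏ c ∈ A', (1 - q c) ≤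
      ∏ c ∈ A', Real.exp (-(T * (dSet c C / S) / 2)) := by
    apply Finset.prod_le_prod
    · intro c hc; linarith [hq1 c hc]
    · intro c hc
      have hx : 0 ≤ T * (dSet c C / S) / 2 := by
        have := dSet_nonneg c C
        positivity
      rcases le_or_gt 1 (T * (dSet c C / S) / 2) with h | h
      · have : (1:ℝ) ≤ q c := by
          have := hq c hc; rwa [min_eq_left h] at this
        have := Real.exp_pos (-(T * (dSet c C / S) / 2))
        linarith
      · have hqc : T * (dSet c C / S) / 2 ≤ q c := by
          have := hq c hc; rwa [min_eq_right h.le] at this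
        calc 1 - q c ≤ 1 - T * (dSet c C / S) / 2 := by linarith
          _ ≤ Real.exp (-(T * (dSet c C / S) / 2)) := by
              have := Real.add_one_le_exp (-(T * (dSet c C / S) / 2)); linarith
  refine step1.trans ?_
  rw [← Real.exp_sum]
  apply Real.exp_le_exp.mpr
  have hsum : ∑ c ∈ A', -(T * (dSet c C / S) / 2)
      = -(T / (2 * S)) * ∑ c ∈ A', dSet c C := by
    rw [Finset.mul_sum]
    apply Finset.sum_congr rfl
    intro c _
    field_simp
  rw [hsum]
  have heq : -(T / (2 * S)) * ∑ c ∈ A', dSet c C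
      = -(T * ∑ c ∈ A', dSet c C) / (2 * S) := by ring
  rw [heq, div_le_div_iff₀ (by positivity) (by positivity)]
  nlinarith [mul_le_mul_of_nonneg_left hA' hT, hpos]
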